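/- Fix a volume form vol : ⋀⁶ℂ⁶ ≅ ℂ and let (α,β) := vol(α∧β) on ⋀³ℂ⁶. Let A ⊆ ⋀³ℂ⁶ be a Lagrangian subspace (isotropic of dimension 10) which is spanned by the set of vectors w₁∧w₂∧w₃ with (w₁,w₂,w₃) a basis of some W ∈ Θ_A. Then Θ_A is a complete family of pairwise incident planes: any two members of Θ_A intersect nontrivially, and every 3-dimensional subspace of ℂ⁶ intersecting all members of Θ_A nontrivially belongs to Θ_A. -/

import Mathlib

open ExteriorAlgebra Submodule Module

set_option maxRecDepth 100000
set_option synthInstance.maxHeartbeats 1000000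

noncomputable section

variable {V : Type*} [AddCommGroup V] [Module ℂ V]

lemma ι_mem_one (w : V) : ι ℂ w ∈ ⋀[ℂ]^1 V := by
  rw [exteriorPower, pow_one]; exact LinearMap.mem_range_self _ w

lemma wedge3_mem (w₁ w₂ w₃ : V) : ι ℂ w₁ * ι ℂ w₂ * ι ℂ w₃ ∈ ⋀[ℂ]^3 V :=
  SetLike.mul_mem_graded (SetLike.mul_mem_graded (ι_mem_one w₁) (ι_mem_one w₂)) (ι_mem_one w₃)

/-- `w₁ ∧ w₂ ∧ w₃` as an element of `⋀³V`. -/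
def wedge3 (w₁ w₂ w₃ : V) : ⋀[ℂ]^3 V :=
  ⟨ι ℂ w₁ * ι ℂ w₂ * ι ℂ w₃, wedge3_mem w₁ w₂ w₃⟩

lemma mul_mem_six (α β : ⋀[ℂ]^3 V) :
    (α : ExteriorAlgebra ℂ V) * (β : ExteriorAlgebra ℂ V) ∈ ⋀[ℂ]^6 V :=
  SetLike.mul_mem_graded α.2 β.2

/-- The bilinear form `(α, β) := vol (α ∧ β)` on `⋀³V` induced by a volume form
`vol : ⋀⁶V ≅ ℂ`. -/
def symForm (vol : (⋀[ℂ]^6 V) ≃ₗ[ℂ] ℂ) (α β : ⋀[ℂ]^3 V) : ℂ :=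
  vol ⟨(α : ExteriorAlgebra ℂ V) * (β : ExteriorAlgebra ℂ V), mul_mem_six α β⟩

/-- `Θ_A`: the set of 3-dimensional subspaces `W ⊆ V` with `⋀³W ⊆ A`. -/
def Theta (A : Submodule ℂ (⋀[ℂ]^3 V)) : Set (Submodule ℂ V) :=
  {W | finrank ℂ W = 3 ∧ ∀ w₁ ∈ W, ∀ w₂ ∈ W, ∀ w₃ ∈ W, wedge3 w₁ w₂ w₃ ∈ A}

namespace OGradyAux

abbrev V6 := Fin 6 → ℂ
abbrev EA := ExteriorAlgebra ℂ V6
abbrev Ext3 : Submodule ℂ EA := ⋀[ℂ]^3 V6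
abbrev Ext6 : Submodule ℂ EA := ⋀[ℂ]^6 V6

instance : NoZeroSMulDivisors ℂ EA :=
  ⟨fun {c x} h => by
    by_cases hc : c = 0
    · exact Or.inl hc
    · right
      have h2 := congrArg (fun y => c⁻¹ • y) h
      simpa [smul_smul, inv_mul_cancel₀ hc] using h2⟩

/-! ### Generalities on `ιMulti` -/

lemma comp_fin_append {α β : Type*} {m n : ℕ} (g : α → β) (a : Fin m → α) (b : Fin n → α) :
    g ∘ Fin.append a b = Fin.append (g ∘ a) (g ∘ b) := by
  funext i
  refine Fin.addCases (fun i => ?_) (fun i => ?_) i <;>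
    simp [Fin.append_left, Fin.append_right]

lemma ιMulti_mul_ιMulti {m n : ℕ} (u : Fin m → V6) (w : Fin n → V6) :
    (ιMulti ℂ m u : EA) * ιMulti ℂ n w = ιMulti ℂ (m + n) (Fin.append u w) := by
  rw [ιMulti_apply, ιMulti_apply, ιMulti_apply]
  rw [show (fun i => ExteriorAlgebra.ι ℂ (Fin.append u w i))
      = Fin.append (fun i => ExteriorAlgebra.ι ℂ (u i)) (fun i => ExteriorAlgebra.ι ℂ (w i)) from
    comp_fin_append _ u w]
  rw [List.ofFn_fin_append, List.prod_append]

/-- linear functional on the exterior algebra extending an alternating map in degree `n` -/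
def altLift {n : ℕ} (f : V6 [⋀^Fin n]→ₗ[ℂ] ℂ) : EA →ₗ[ℂ] ℂ :=
  liftAlternating (Function.update 0 n f)

@[simp] lemma altLift_ιMulti {n : ℕ} (f : V6 [⋀^Fin n]→ₗ[ℂ] ℂ) (v : Fin n → V6) :
    altLift f (ιMulti ℂ n v) = f v := by
  rw [altLift, liftAlternating_apply_ιMulti, Function.update_self]

lemma ιMulti_ne_zero_of_linearIndependent {v : Fin 6 → V6} (hv : LinearIndependent ℂ v) :
    ιMulti ℂ 6 v ≠ 0 := by
  have hcard : Fintype.card (Fin 6) = finrank ℂ V6 := by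
    simp [Module.finrank_fintype_fun_eq_card]
  set b := basisOfLinearIndependentOfCardEqFinrank hv hcard with hb
  intro h
  have h1 : altLift b.det (ιMulti ℂ 6 v) = b.det v := altLift_ιMulti _ _
  have h2 : b.det v = 1 := by
    have : ⇑b = v := coe_basisOfLinearIndependentOfCardEqFinrank hv hcard
    rw [← this]
    exact b.det_self
  rw [h, map_zero, h2] at h1
  exact one_ne_zero h1.symm

lemma ιMulti_eq_zero_of_dependent {n : ℕ} {v : Fin n → V6} (hv : ¬ LinearIndependent ℂ v) :
    ιMulti ℂ n v = 0 :=
  AlternatingMap.map_linearDependent _ v hv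

/-! ### A basis of `⋀³(ℂ⁶)` -/

abbrev Sf := {s : Finset (Fin 6) // s.card = 3}

def ee : Fin 6 → V6 := Pi.basisFun ℂ (Fin 6)

lemma ee_linearIndependent : LinearIndependent ℂ ee :=
  (Pi.basisFun ℂ (Fin 6)).linearIndependent

def idx (s : Sf) : Fin 3 → Fin 6 := fun i => (s.1.orderIsoOfFin s.2 i : Fin 6)

lemma idx_injective (s : Sf) : Function.Injective (idx s) := fun _ _ h =>
  (s.1.orderIsoOfFin s.2).injective (Subtype.ext h)

lemma idx_mem (s : Sf) (i : Fin 3) : idx s i ∈ s.1 := (s.1.orderIsoOfFin s.2 i).2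

def bb (s : Sf) : EA := ιMulti ℂ 3 (fun i => ee (idx s i))

lemma bb_mem (s : Sf) : bb s ∈ Ext3 := ιMulti_range ℂ 3 ⟨_, rfl⟩

def bS (s : Sf) : Ext3 := ⟨bb s, bb_mem s⟩

def dS (s : Sf) : V6 [⋀^Fin 3]→ₗ[ℂ] ℂ :=
  (Matrix.detRowAlternating : (Fin 3 → ℂ) [⋀^Fin 3]→ₗ[ℂ] ℂ).compLinearMap
    (LinearMap.funLeft ℂ ℂ (idx s))

lemma ee_apply (k m : Fin 6) : ee k m = if k = m then 1 else 0 := by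
  simp [ee, Pi.basisFun_apply, Pi.single_apply, eq_comm]

lemma dS_apply (s : Sf) (v : Fin 3 → V6) :
    dS s v = Matrix.det (Matrix.of fun i j => v i (idx s j)) := rfl

lemma dS_apply_eq (s : Sf) : dS s (fun i => ee (idx s i)) = 1 := by
  rw [dS_apply]
  have : (Matrix.of fun i j => ee (idx s i) (idx s j)) = (1 : Matrix (Fin 3) (Fin 3) ℂ) := by
    ext i j
    rw [Matrix.of_apply, ee_apply, Matrix.one_apply]
    by_cases h : i = j
    · simp [h]
    · rw [if_neg (fun hc => h (idx_injective s hc)), if_neg h]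
  rw [this, Matrix.det_one]

lemma dS_apply_ne {s t : Sf} (h : s ≠ t) : dS s (fun i => ee (idx t i)) = 0 := by
  have hts : ¬ t.1 ⊆ s.1 := fun hsub =>
    h (Subtype.ext (Finset.eq_of_subset_of_card_le hsub (by rw [s.2, t.2])).symm)
  obtain ⟨x, hxt, hxs⟩ := Finset.not_subset.mp hts
  obtain ⟨i, hi⟩ : ∃ i, idx t i = x := by
    obtain ⟨i, hi⟩ := (t.1.orderIsoOfFin t.2).surjective ⟨x, hxt⟩
    exact ⟨i, congrArg Subtype.val hi⟩
  rw [dS_apply]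
  apply Matrix.det_eq_zero_of_row_eq_zero i
  intro j
  rw [Matrix.of_apply, ee_apply, if_neg]
  intro hc
  apply hxs
  rw [← hi, hc]
  exact idx_mem s j

lemma bS_linearIndependent : LinearIndependent ℂ bS := by
  rw [Fintype.linearIndependent_iff]
  intro g hg s
  set φ : Ext3 →ₗ[ℂ] ℂ := (altLift (dS s)).comp (Submodule.subtype _) with hφ
  have h1 : φ (∑ t, g t • bS t) = 0 := by rw [hg, map_zero]
  rw [map_sum] at h1
  have h2 : ∀ t, φ (bS t) = if s = t then 1 else 0 := by
    intro t
    show altLift (dS s) (bb t) = _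
    rw [bb, altLift_ιMulti]
    by_cases h : s = t
    · subst h; rw [if_pos rfl, dS_apply_eq]
    · rw [if_neg h, dS_apply_ne h]
  have h3 : ∀ t, φ (g t • bS t) = g t * (if s = t then 1 else 0) := by
    intro t; rw [map_smul, h2, smul_eq_mul]
  simp_rw [h3] at h1
  simpa using h1

lemma span_bb : span ℂ (Set.range bb) = Ext3 := by
  refine le_antisymm (span_le.mpr ?_) ?_
  · rintro _ ⟨s, rfl⟩; exact bb_mem s
  · show (⋀[ℂ]^3 V6 : Submodule ℂ EA) ≤ span ℂ (Set.range bb)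
    rw [← ιMulti_span_fixedDegree]
    refine span_le.mpr ?_
    rintro _ ⟨v, rfl⟩
    have hv : v = fun i => ∑ j : Fin 6, v i j • ee j := by
      have hee : ∀ j : Fin 6, (fun m => if j = m then (1:ℂ) else 0) = ee j :=
        fun j => funext fun m => (ee_apply j m).symm
      funext i
      conv_lhs => rw [pi_eq_sum_univ (v i)]
      simp_rw [hee]
    have expand : ιMulti ℂ 3 v
        = ∑ r : Fin 3 → Fin 6, (∏ i, v i (r i)) • ιMulti ℂ 3 (fun i => ee (r i)) := by
      conv_lhs => rw [hv]
      rw [show (ιMulti ℂ 3 : AlternatingMap ℂ V6 EA (Fin 3)) (fun i => ∑ j : Fin 6, v i j • ee j)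
          = (ιMulti ℂ 3).toMultilinearMap (fun i => ∑ j : Fin 6, v i j • ee j) from rfl,
        MultilinearMap.map_sum]
      refine Finset.sum_congr rfl fun r _ => ?_
      rw [MultilinearMap.map_smul_univ]
      rfl
    rw [expand]
    refine sum_mem fun r _ => ?_
    by_cases hinj : Function.Injective r
    · set s : Sf := ⟨Finset.image r Finset.univ, by
        rw [Finset.card_image_of_injective _ hinj, Finset.card_univ, Fintype.card_fin]⟩ with hs
      have hmem : ∀ i, r i ∈ s.1 := fun i => Finset.mem_image_of_mem r (Finset.mem_univ i)
      set π : Fin 3 → Fin 3 := fun i => (s.1.orderIsoOfFin s.2).symm ⟨r i, hmem i⟩ with hπ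
      have hπinj : Function.Injective π := by
        intro i j h
        have h2 : (⟨r i, hmem i⟩ : {x // x ∈ s.1}) = ⟨r j, hmem j⟩ :=
          (s.1.orderIsoOfFin s.2).symm.injective h
        exact hinj (congrArg Subtype.val h2)
      set πe : Equiv.Perm (Fin 3) := Equiv.ofBijective π (Finite.injective_iff_bijective.mp hπinj)
        with hπe
      have key : (fun i => ee (r i)) = (fun i => ee (idx s i)) ∘ πe := by
        funext i
        simp only [Function.comp_apply]
        have hπi : idx s (πe i) = r i := by
          show ((s.1.orderIsoOfFin s.2) ((s.1.orderIsoOfFin s.2).symm ⟨r i, hmem i⟩) : Fin 6) = r i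
          rw [OrderIso.apply_symm_apply]
        rw [hπi]
      rw [key, AlternatingMap.map_perm]
      rcases Int.units_eq_one_or (Equiv.Perm.sign πe) with h | h <;> rw [h]
      · rw [one_smul]
        exact smul_mem _ _ (subset_span ⟨s, rfl⟩)
      · rw [Units.neg_smul, one_smul, smul_neg]
        exact neg_mem (smul_mem _ _ (subset_span ⟨s, rfl⟩))
    · have hdep : ¬ LinearIndependent ℂ (fun i => ee (r i)) := by
        intro hli
        exact hinj fun i j hij => hli.injective (congrArg ee hij)
      rw [AlternatingMap.map_linearDependent (ιMulti ℂ 3) _ hdep, smul_zero]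
      exact zero_mem _

lemma span_bS : span ℂ (Set.range bS) = ⊤ := by
  apply Submodule.map_injective_of_injective (Submodule.injective_subtype Ext3)
  rw [Submodule.map_span, Submodule.map_subtype_top, ← Set.range_comp]
  exact span_bb

def B3 : Basis Sf ℂ Ext3 := Basis.mk bS_linearIndependent (by rw [span_bS])

instance : FiniteDimensional ℂ Ext3 := Module.Finite.of_basis B3

lemma finrank_Ext3 : finrank ℂ Ext3 = 20 := by
  rw [finrank_eq_card_basis B3]
  rw [show Fintype.card Sf = (Fintype.card (Fin 6)).choose 3 from Fintype.card_finset_len 3]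
  rfl


/-! ### The bilinear form is reflexive and nondegenerate -/

lemma wedge3_coe (w₁ w₂ w₃ : V6) :
    ((wedge3 w₁ w₂ w₃ : ⋀[ℂ]^3 V6) : EA) = ιMulti ℂ 3 ![w₁, w₂, w₃] := by
  rw [ιMulti_apply]
  show ExteriorAlgebra.ι ℂ w₁ * ExteriorAlgebra.ι ℂ w₂ * ExteriorAlgebra.ι ℂ w₃ = _
  simp [List.ofFn_succ, mul_assoc]

lemma append_mem6 (v : Fin 6 → V6) : ιMulti ℂ 6 v ∈ Ext6 := ιMulti_range ℂ 6 ⟨_, rfl⟩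

lemma symForm_eq (vol : Ext6 ≃ₗ[ℂ] ℂ) (α β : Ext3) (u w : Fin 3 → V6)
    (hα : (α : EA) = ιMulti ℂ 3 u) (hβ : (β : EA) = ιMulti ℂ 3 w) :
    symForm vol α β = vol ⟨ιMulti ℂ 6 (Fin.append u w), append_mem6 _⟩ := by
  unfold symForm
  exact congrArg vol (Subtype.ext (show (α : EA) * (β : EA) = ιMulti ℂ 6 (Fin.append u w) by
    rw [hα, hβ, ιMulti_mul_ιMulti]))

lemma symForm_zero_of_dep (vol : Ext6 ≃ₗ[ℂ] ℂ) (α β : Ext3) (u w : Fin 3 → V6)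
    (hα : (α : EA) = ιMulti ℂ 3 u) (hβ : (β : EA) = ιMulti ℂ 3 w)
    (hdep : ¬ LinearIndependent ℂ (Fin.append u w)) :
    symForm vol α β = 0 := by
  rw [symForm_eq vol α β u w hα hβ]
  rw [show (⟨ιMulti ℂ 6 (Fin.append u w), append_mem6 _⟩ : Ext6) = 0 from
    Subtype.ext (by simpa using ιMulti_eq_zero_of_dependent hdep), map_zero]

lemma symForm_ne_zero_of_indep (vol : Ext6 ≃ₗ[ℂ] ℂ) (α β : Ext3) (u w : Fin 3 → V6)
    (hα : (α : EA) = ιMulti ℂ 3 u) (hβ : (β : EA) = ιMulti ℂ 3 w)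
    (hind : LinearIndependent ℂ (Fin.append u w)) :
    symForm vol α β ≠ 0 := by
  rw [symForm_eq vol α β u w hα hβ]
  intro h
  have h0 := vol.map_eq_zero_iff.mp h
  exact ιMulti_ne_zero_of_linearIndependent hind (by simpa using congrArg Subtype.val h0)

/-- the bilinear form as a `BilinForm` -/
def Bf (vol : Ext6 ≃ₗ[ℂ] ℂ) : LinearMap.BilinForm ℂ Ext3 :=
  LinearMap.mk₂ ℂ (symForm vol)
    (fun α α' β => by
      unfold symForm
      have h2 : (⟨((α + α' : Ext3) : EA) * β, mul_mem_six (α + α') β⟩ : Ext6)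
          = ⟨(α : EA) * β, mul_mem_six α β⟩ + ⟨(α' : EA) * β, mul_mem_six α' β⟩ :=
        Subtype.ext (by push_cast; rw [add_mul])
      rw [h2, map_add])
    (fun c α β => by
      unfold symForm
      have h2 : (⟨((c • α : Ext3) : EA) * β, mul_mem_six (c • α) β⟩ : Ext6)
          = c • ⟨(α : EA) * β, mul_mem_six α β⟩ :=
        Subtype.ext (by push_cast; rw [smul_mul_assoc])
      rw [h2, map_smul, smul_eq_mul])
    (fun α β β' => by
      unfold symForm
      have h2 : (⟨(α : EA) * ((β + β' : Ext3) : EA), mul_mem_six α (β + β')⟩ : Ext6)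
          = ⟨(α : EA) * β, mul_mem_six α β⟩ + ⟨(α : EA) * β', mul_mem_six α β'⟩ :=
        Subtype.ext (by push_cast; rw [mul_add])
      rw [h2, map_add])
    (fun c α β => by
      unfold symForm
      have h2 : (⟨(α : EA) * ((c • β : Ext3) : EA), mul_mem_six α (c • β)⟩ : Ext6)
          = c • ⟨(α : EA) * β, mul_mem_six α β⟩ :=
        Subtype.ext (by push_cast; rw [mul_smul_comm])
      rw [h2, map_smul, smul_eq_mul])

lemma Bf_apply (vol : Ext6 ≃ₗ[ℂ] ℂ) (α β : Ext3) : Bf vol α β = symForm vol α β := rfl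

/-! ### anticommutativity in degree 3 -/

lemma rot3_apply (i : Fin 6) : ((finRotate 6)^3 : Equiv.Perm (Fin 6)) i = i + 3 := by
  fin_cases i <;> rfl

lemma append_rot3 (u w : Fin 3 → V6) :
    Fin.append u w ∘ ((finRotate 6)^3 : Equiv.Perm (Fin 6)) = Fin.append w u := by
  funext i
  simp only [Function.comp_apply, rot3_apply]
  fin_cases i <;> rfl

lemma sign_rot3 : Equiv.Perm.sign ((finRotate 6)^3 : Equiv.Perm (Fin 6)) = -1 := by
  rw [map_pow, sign_finRotate]
  decide

lemma mul_anticomm {x y : EA} (hx : x ∈ (⋀[ℂ]^3 V6 : Submodule ℂ EA))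
    (hy : y ∈ (⋀[ℂ]^3 V6 : Submodule ℂ EA)) : x * y + y * x = 0 := by
  rw [← ιMulti_span_fixedDegree] at hx hy
  induction hx, hy using Submodule.span_induction₂ with
  | mem_mem a b ha hb =>
    obtain ⟨u, rfl⟩ := ha
    obtain ⟨w, rfl⟩ := hb
    rw [ιMulti_mul_ιMulti, ιMulti_mul_ιMulti]
    have h1 : Fin.append w u = Fin.append u w ∘ ((finRotate 6)^3 : Equiv.Perm (Fin 6)) :=
      (append_rot3 u w).symm
    rw [h1, AlternatingMap.map_perm, sign_rot3, Units.neg_smul, one_smul, add_neg_cancel]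
  | zero_left y hy => simp
  | zero_right x hx => simp
  | add_left x y z hx hy hz h1 h2 =>
    have hr : x * z + z * x + (y * z + z * y) = x * z + y * z + (z * x + z * y) := by abel
    rw [add_mul, mul_add, ← hr, h1, h2, add_zero]
  | add_right x y z hx hy hz h1 h2 =>
    have hr : x * y + y * x + (x * z + z * x) = x * y + x * z + (y * x + z * x) := by abel
    rw [mul_add, add_mul, ← hr, h1, h2, add_zero]
  | smul_left r x y hx hy h =>
    rw [smul_mul_assoc, mul_smul_comm, ← smul_add, h, smul_zero]
  | smul_right r x y hx hy h =>
    rw [smul_mul_assoc, mul_smul_comm, ← smul_add, h, smul_zero]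

lemma Bf_isRefl (vol : Ext6 ≃ₗ[ℂ] ℂ) : (Bf vol).IsRefl := by
  intro α β h
  have hkey : (β : EA) * α = -((α : EA) * β) :=
    eq_neg_of_add_eq_zero_right (mul_anticomm α.2 β.2)
  show symForm vol β α = 0
  unfold symForm
  have h2 : (⟨(β : EA) * α, mul_mem_six β α⟩ : Ext6) = -⟨(α : EA) * β, mul_mem_six α β⟩ :=
    Subtype.ext (by simp [hkey])
  rw [h2, map_neg, show vol ⟨(α : EA) * β, mul_mem_six α β⟩ = 0 from h, neg_zero]

/-! ### nondegeneracy -/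

lemma compl_card (s : Sf) : (s.1ᶜ).card = 3 := by
  rw [Finset.card_compl, s.2]
  rfl

def cS (s : Sf) : Sf := ⟨s.1ᶜ, compl_card s⟩

lemma bS_coe (s : Sf) : (bS s : EA) = ιMulti ℂ 3 (fun i => ee (idx s i)) := rfl

lemma Bf_bS_ne {t s : Sf} (h : t ≠ s) (vol : Ext6 ≃ₗ[ℂ] ℂ) :
    Bf vol (bS t) (bS (cS s)) = 0 := by
  rw [Bf_apply, symForm_eq vol _ _ _ _ (bS_coe t) (bS_coe (cS s))]
  obtain ⟨x, hxt, hxs⟩ := Finset.not_subset.mp (fun hsub =>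
    h (Subtype.ext (Finset.eq_of_subset_of_card_le hsub (by rw [s.2, t.2]))))
  obtain ⟨i, hi⟩ : ∃ i, idx t i = x := by
    obtain ⟨i, hi⟩ := (t.1.orderIsoOfFin t.2).surjective ⟨x, hxt⟩
    exact ⟨i, congrArg Subtype.val hi⟩
  have hxc : x ∈ (cS s).1 := Finset.mem_compl.mpr hxs
  obtain ⟨j, hj⟩ : ∃ j, idx (cS s) j = x := by
    obtain ⟨j, hj⟩ := ((cS s).1.orderIsoOfFin (cS s).2).surjective ⟨x, hxc⟩
    exact ⟨j, congrArg Subtype.val hj⟩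
  set v := Fin.append (fun i => ee (idx t i)) (fun i => ee (idx (cS s) i)) with hv
  have heq : v (Fin.castAdd 3 i) = v (Fin.natAdd 3 j) := by
    rw [hv, Fin.append_left, Fin.append_right, hi, hj]
  have hne : Fin.castAdd 3 i ≠ Fin.natAdd 3 j := by
    intro hc
    have := congrArg Fin.val hc
    simp only [Fin.coe_castAdd, Fin.coe_natAdd] at this
    omega
  have hz : (⟨ιMulti ℂ 6 v, append_mem6 v⟩ : Ext6) = 0 :=
    Subtype.ext (by simpa using AlternatingMap.map_eq_zero_of_eq (ιMulti ℂ 6) v heq hne)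
  rw [hz, map_zero]

lemma Bf_bS_compl_ne_zero (s : Sf) (vol : Ext6 ≃ₗ[ℂ] ℂ) :
    Bf vol (bS s) (bS (cS s)) ≠ 0 := by
  rw [Bf_apply, symForm_eq vol _ _ _ _ (bS_coe s) (bS_coe (cS s))]
  set g : Fin 6 → Fin 6 := Fin.append (idx s) (idx (cS s)) with hg
  have hfam : Fin.append (fun i => ee (idx s i)) (fun i => ee (idx (cS s) i)) = ee ∘ g :=
    (comp_fin_append ee (idx s) (idx (cS s))).symm
  have hsurj : Function.Surjective g := by
    intro x
    by_cases hx : x ∈ s.1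
    · obtain ⟨i, hi⟩ := (s.1.orderIsoOfFin s.2).surjective ⟨x, hx⟩
      exact ⟨Fin.castAdd 3 i, by rw [hg, Fin.append_left]; exact congrArg Subtype.val hi⟩
    · obtain ⟨j, hj⟩ := ((cS s).1.orderIsoOfFin (cS s).2).surjective ⟨x, Finset.mem_compl.mpr hx⟩
      exact ⟨Fin.natAdd 3 j, by rw [hg, Fin.append_right]; exact congrArg Subtype.val hj⟩
  have hbij : Function.Bijective g := Finite.surjective_iff_bijective.mp hsurj
  set πg : Equiv.Perm (Fin 6) := Equiv.ofBijective g hbij with hπg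
  have hcomp : ee ∘ g = ee ∘ ⇑πg := rfl
  have hperm := AlternatingMap.map_perm (ιMulti ℂ 6) ee πg
  intro h
  have h0 := vol.map_eq_zero_iff.mp h
  have h1 : ιMulti ℂ 6 (ee ∘ ⇑πg) = 0 := by
    have := congrArg Subtype.val h0
    simpa [hfam, hcomp] using this
  rw [hperm] at h1
  have hnz := ιMulti_ne_zero_of_linearIndependent ee_linearIndependent
  rcases Int.units_eq_one_or (Equiv.Perm.sign πg) with hs | hs <;> rw [hs] at h1
  · rw [one_smul] at h1; exact hnz h1
  · rw [Units.neg_smul, one_smul, neg_eq_zero] at h1; exact hnz h1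

lemma Bf_nondeg (vol : Ext6 ≃ₗ[ℂ] ℂ) : (Bf vol).Nondegenerate := by
  refine (Bf_isRefl vol).nondegenerate_iff_separatingLeft.mpr ?_
  intro α hα
  have hB3 : ∀ t, B3 t = bS t := fun t => by rw [B3, Basis.coe_mk]
  have hrepr : ∀ s : Sf, B3.repr α s = 0 := by
    intro s
    have h0 := hα (bS (cS s))
    conv_lhs at h0 => rw [← B3.sum_repr α]
    rw [LinearMap.BilinForm.sum_left] at h0
    have hterm : ∀ t : Sf, Bf vol (B3.repr α t • B3 t) (bS (cS s))
        = if t = s then B3.repr α t * Bf vol (bS s) (bS (cS s)) else 0 := by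
      intro t
      rw [LinearMap.BilinForm.smul_left, hB3]
      by_cases ht : t = s
      · subst ht; rw [if_pos rfl]
      · rw [if_neg ht, Bf_bS_ne ht, mul_zero]
    simp_rw [hterm] at h0
    rw [Finset.sum_ite_eq' Finset.univ s, if_pos (Finset.mem_univ s)] at h0
    exact (mul_eq_zero.mp h0).resolve_right (Bf_bS_compl_ne_zero s vol)
  exact B3.repr.map_eq_zero_iff.mp (Finsupp.ext hrepr)

end OGradyAux

open OGradyAux in
/-- **O'Grady, Claim 2.3 (second half).** Let `A ⊆ ⋀³ℂ⁶` be a Lagrangian subspace (isotropic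
of dimension `10`) which is spanned by the vectors `w₁∧w₂∧w₃`, for `(w₁,w₂,w₃)` a basis of
some `W ∈ Θ_A`. Then `Θ_A` is a complete family of pairwise incident planes. -/
theorem theta_complete_of_spanned_lagrangian
    (vol : (⋀[ℂ]^6 (Fin 6 → ℂ)) ≃ₗ[ℂ] ℂ)
    (A : Submodule ℂ (⋀[ℂ]^3 (Fin 6 → ℂ)))
    (hiso : ∀ α ∈ A, ∀ β ∈ A, symForm vol α β = 0)
    (hdim : finrank ℂ A = 10)
    (hspan : A = span ℂ {x : ⋀[ℂ]^3 (Fin 6 → ℂ) | ∃ W ∈ Theta A,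
      ∃ w : Fin 3 → (Fin 6 → ℂ), LinearIndependent ℂ w ∧ span ℂ (Set.range w) = W ∧
      x = wedge3 (w 0) (w 1) (w 2)}) :
    (∀ W ∈ Theta A, ∀ W' ∈ Theta A, W ⊓ W' ≠ ⊥) ∧
    (∀ W : Submodule ℂ (Fin 6 → ℂ), finrank ℂ W = 3 →
      (∀ W' ∈ Theta A, W ⊓ W' ≠ ⊥) → W ∈ Theta A) := by
  classical
  constructor
  · -- pairwise incidence
    intro W hW W' hW' hbot
    obtain ⟨hW3, hWcl⟩ := hW
    obtain ⟨hW'3, hW'cl⟩ := hW'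
    let bu := finBasisOfFinrankEq ℂ W hW3
    let bw := finBasisOfFinrankEq ℂ W' hW'3
    set u : Fin 3 → V6 := fun i => (bu i : V6) with hu_def
    set w : Fin 3 → V6 := fun i => (bw i : V6) with hw_def
    have hu : LinearIndependent ℂ u :=
      bu.linearIndependent.map' W.subtype (Submodule.ker_subtype W)
    have hw : LinearIndependent ℂ w :=
      bw.linearIndependent.map' W'.subtype (Submodule.ker_subtype W')
    have hWa : wedge3 (u 0) (u 1) (u 2) ∈ A :=
      hWcl _ (bu 0).2 _ (bu 1).2 _ (bu 2).2
    have hW'a : wedge3 (w 0) (w 1) (w 2) ∈ A :=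
      hW'cl _ (bw 0).2 _ (bw 1).2 _ (bw 2).2
    have h0 : symForm vol (wedge3 (u 0) (u 1) (u 2)) (wedge3 (w 0) (w 1) (w 2)) = 0 :=
      hiso _ hWa _ hW'a
    have hindep : LinearIndependent ℂ (Fin.append u w) := by
      have hd : Disjoint (span ℂ (Set.range u)) (span ℂ (Set.range w)) := by
        refine Disjoint.mono ?_ ?_ (disjoint_iff.mpr hbot)
        · rw [span_le]; rintro _ ⟨i, rfl⟩; exact (bu i).2
        · rw [span_le]; rintro _ ⟨i, rfl⟩; exact (bw i).2
      have hsum := hu.sum_type hw hd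
      have he : Fin.append u w = Sum.elim u w ∘ ⇑finSumFinEquiv.symm := by
        funext i
        refine Fin.addCases (fun i => ?_) (fun i => ?_) i
        · rw [Fin.append_left]
          simp only [Function.comp_apply, finSumFinEquiv_symm_apply_castAdd, Sum.elim_inl]
        · rw [Fin.append_right]
          simp only [Function.comp_apply, finSumFinEquiv_symm_apply_natAdd, Sum.elim_inr]
      rw [he]
      exact hsum.comp _ finSumFinEquiv.symm.injective
    have hu3 : ![u 0, u 1, u 2] = u := by funext i; fin_cases i <;> rfl
    have hw3 : ![w 0, w 1, w 2] = w := by funext i; fin_cases i <;> rfl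
    exact symForm_ne_zero_of_indep vol _ _ u w
      ((wedge3_coe (u 0) (u 1) (u 2)).trans (by rw [hu3]))
      ((wedge3_coe (w 0) (w 1) (w 2)).trans (by rw [hw3])) hindep h0
  · -- completeness
    intro W h3 hmeet
    have hle : A ≤ (Bf vol).orthogonal A := fun a ha n hn => hiso n hn a ha
    have hALag : A = (Bf vol).orthogonal A := by
      refine Submodule.eq_of_le_of_finrank_eq hle ?_
      rw [hdim, LinearMap.BilinForm.finrank_orthogonal (Bf_nondeg vol) A,
        finrank_Ext3, hdim]
    refine ⟨h3, fun w₁ h₁ w₂ h₂ w₃ h₃ => ?_⟩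
    set x : ⋀[ℂ]^3 V6 := wedge3 w₁ w₂ w₃ with hx_def
    have hx : x ∈ (Bf vol).orthogonal A := by
      intro n hn
      rw [hspan] at hn
      have hker : span ℂ {y : ⋀[ℂ]^3 (Fin 6 → ℂ) | ∃ W ∈ Theta A,
          ∃ w : Fin 3 → (Fin 6 → ℂ), LinearIndependent ℂ w ∧ span ℂ (Set.range w) = W ∧
          y = wedge3 (w 0) (w 1) (w 2)} ≤ LinearMap.ker ((Bf vol).flip x) := by
        rw [span_le]
        rintro _ ⟨W', hW', uu, huu, hsp, rfl⟩
        rw [SetLike.mem_coe, LinearMap.mem_ker]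
        show symForm vol (wedge3 (uu 0) (uu 1) (uu 2)) x = 0
        have huu3 : ![uu 0, uu 1, uu 2] = uu := by funext i; fin_cases i <;> rfl
        refine symForm_zero_of_dep vol _ _ uu ![w₁, w₂, w₃]
          ((wedge3_coe (uu 0) (uu 1) (uu 2)).trans (by rw [huu3]))
          (wedge3_coe w₁ w₂ w₃) ?_
        -- the six vectors live in `W' ⊔ W` which has dimension at most 5
        intro hind
        have hUmem : ∀ i : Fin (3 + 3), Fin.append uu ![w₁, w₂, w₃] i ∈ W' ⊔ W := by
          intro i
          refine Fin.addCases (fun i => ?_) (fun i => ?_) i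
          · rw [Fin.append_left]
            refine Submodule.mem_sup_left ?_
            rw [← hsp]
            exact subset_span ⟨i, rfl⟩
          · rw [Fin.append_right]
            refine Submodule.mem_sup_right ?_
            fin_cases i <;> assumption
        have hspan_le : span ℂ (Set.range (Fin.append uu ![w₁, w₂, w₃])) ≤ W' ⊔ W := by
          rw [span_le]; rintro _ ⟨i, rfl⟩; exact hUmem i
        have h6 : finrank ℂ (span ℂ (Set.range (Fin.append uu ![w₁, w₂, w₃]))) = 6 := by
          rw [finrank_span_eq_card hind]; rfl
        have hfr : finrank ℂ (W' ⊔ W : Submodule ℂ V6) + finrank ℂ (W' ⊓ W : Submodule ℂ V6)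
            = finrank ℂ W' + finrank ℂ W := Submodule.finrank_sup_add_finrank_inf_eq W' W
        have hne : W' ⊓ W ≠ ⊥ := by
          rw [inf_comm]
          exact hmeet W' hW'
        have hpos : finrank ℂ (W' ⊓ W : Submodule ℂ V6) ≠ 0 :=
          fun hc => hne (Submodule.finrank_eq_zero.mp hc)
        have hW'1 : finrank ℂ W' = 3 := hW'.1
        have hmono := Submodule.finrank_mono hspan_le
        rw [h6] at hmono
        have hc1 : finrank ℂ (W' ⊔ W : Submodule ℂ V6) ≤ 5 := by
          have h' := hfr
          rw [hW'1, h3] at h'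
          omega
        exact absurd (le_trans hmono hc1) (by norm_num)
      have := hker hn
      rw [LinearMap.mem_ker] at this
      exact this
    rwa [← hALag] at hx

end
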